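/- Let (z₁, …, z_m) be positive integers with z₁ + ⋯ + z_m = n. Then Σ_{j=1}^m min{z_j², n} ≤ n^{3/2}. -/
import Mathlib

open Finset

/-- Let `z₁, …, z_m` be positive integers with `z₁ + ⋯ + z_m = n`. Then
`Σ_{j=1}^m min{z_j², n} ≤ n^{3/2}`. -/
theorem sum_min_sq_le_rpow (n m : ℕ) (z : Fin m → ℕ)
    (hpos : ∀ j, 0 < z j) (hsum : ∑ j, z j = n) :
    ((∑ j, min ((z j) ^ 2) n : ℕ) : ℝ) ≤ (n : ℝ) ^ (3 / 2 : ℝ) := by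
  have hs : (0:ℝ) ≤ Real.sqrt n := Real.sqrt_nonneg _
  have key : ∀ j, ((min ((z j) ^ 2) n : ℕ) : ℝ) ≤ (z j : ℝ) * Real.sqrt n := by
    intro j
    rcases le_or_gt ((z j : ℝ)) (Real.sqrt n) with h | h
    · calc ((min ((z j) ^ 2) n : ℕ) : ℝ) ≤ ((z j : ℝ))^2 := by
            push_cast; exact_mod_cast le_trans (Nat.cast_le.mpr (min_le_left _ _)) (by push_cast; ring_nf; exact le_refl _)
          _ = (z j : ℝ) * (z j : ℝ) := sq (z j : ℝ) ▸ by ring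
          _ ≤ (z j : ℝ) * Real.sqrt n := by
            exact mul_le_mul_of_nonneg_left h (Nat.cast_nonneg _)
    · calc ((min ((z j) ^ 2) n : ℕ) : ℝ) ≤ (n : ℝ) := by exact_mod_cast min_le_right _ _
          _ = Real.sqrt n * Real.sqrt n := (Real.mul_self_sqrt (Nat.cast_nonneg _)).symm
          _ ≤ (z j : ℝ) * Real.sqrt n := mul_le_mul_of_nonneg_right h.le hs
  calc ((∑ j, min ((z j) ^ 2) n : ℕ) : ℝ) = ∑ j, ((min ((z j) ^ 2) n : ℕ) : ℝ) := by push_cast; rfl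
    _ ≤ ∑ j, (z j : ℝ) * Real.sqrt n := Finset.sum_le_sum fun j _ => key j
    _ = (n : ℝ) * Real.sqrt n := by rw [← Finset.sum_mul]; norm_cast; rw [hsum]
    _ = (n : ℝ) ^ (3 / 2 : ℝ) := by
        rw [Real.sqrt_eq_rpow, ← Real.rpow_one_add' (Nat.cast_nonneg n) (by norm_num)]
        norm_num
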